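/- For every natural number n > 1, the dimensionality of γ(n) equals m, where p_m is the greatest prime factor of n. -/

import Mathlib

/-- The standard RPF natural spelling function.  `true` = '(' and `false` = ')'.
For `n ≥ 2`, `γ n` is the concatenation over `i = 0, …, m-1` of `"(" ++ γ aᵢ ++ ")"`,
where `aᵢ` is the exponent of the `i`-th prime (`Nat.nth Nat.Prime i`, 0-indexed, so the
0th prime is 2) in the factorization of `n`, and the `(m-1)`-st prime is the greatest
prime factor of `n` (so `m = Nat.count Nat.Prime (gpf n) + 1`). -/
noncomputable def gamma : ℕ → List Bool
  | 0 => []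
  | 1 => [true, false]
  | (n+2) =>
    ((List.range (Nat.count Nat.Prime ((n+2).factorization.support.sup id) + 1)).map
      (fun i => (true :: gamma ((n+2).factorization (Nat.nth Nat.Prime i))) ++ [false])).flatten
termination_by n => n
decreasing_by exact Nat.factorization_lt _ (by omega)

/-- The dimensionality of a Dyck word: the number of outermost matching parenthesis
pairs, i.e. the number of nonempty balanced prefixes. -/
def dyckDim (w : List Bool) : ℕ :=
  ((List.range (w.length + 1)).filter
    (fun k => decide (0 < k) &&
      decide ((w.take k).count true = (w.take k).count false))).length

/-- Signed count: number of `true`s minus number of `false`s. -/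
def cnt (w : List Bool) : ℤ := (w.count true : ℤ) - (w.count false : ℤ)

lemma cnt_nil : cnt [] = 0 := by simp [cnt]

lemma cnt_append (a b : List Bool) : cnt (a ++ b) = cnt a + cnt b := by
  simp [cnt, List.count_append]; ring

/-- A Dyck word: balanced, all prefixes nonnegative. -/
def IsDyck (w : List Bool) : Prop := cnt w = 0 ∧ ∀ k, 0 ≤ cnt (w.take k)

/-- A "block": nonempty, balanced, strictly positive on all proper nonempty prefixes. -/
def Blockish (w : List Bool) : Prop :=
  w ≠ [] ∧ cnt w = 0 ∧ ∀ k, 0 < k → k < w.length → 0 < cnt (w.take k)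

lemma isDyck_nil : IsDyck [] := ⟨cnt_nil, fun k => by simp [cnt_nil]⟩

lemma isDyck_append {a b : List Bool} (ha : IsDyck a) (hb : IsDyck b) :
    IsDyck (a ++ b) := by
  refine ⟨by rw [cnt_append, ha.1, hb.1]; ring, fun k => ?_⟩
  rw [List.take_append, cnt_append]
  have := ha.2 k
  have := hb.2 (k - a.length)
  omega

lemma isDyck_flatten {L : List (List Bool)} (h : ∀ w ∈ L, IsDyck w) :
    IsDyck L.flatten := by
  induction L with
  | nil => simpa using isDyck_nil
  | cons a t ih =>
    rw [List.flatten_cons]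
    exact isDyck_append (h a (by simp)) (ih fun w hw => h w (by simp [hw]))

lemma block_isDyck {w : List Bool} (h : IsDyck w) :
    IsDyck ((true :: w) ++ [false]) := by
  constructor
  · simp [cnt_append, cnt, List.count_cons]
    have := h.1
    simp [cnt] at this
    omega
  · intro k
    match k with
    | 0 => simp [cnt_nil]
    | (k+1) =>
      rw [List.cons_append, List.take_succ_cons]
      have : cnt (true :: (w ++ [false]).take k) = 1 + cnt ((w ++ [false]).take k) := by
        simp [cnt, List.count_cons]; ring
      rw [this]
      rw [List.take_append, cnt_append]
      have h1 := h.2 k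
      have h2 : (0 : ℤ) - 1 ≤ cnt ([false].take (k - w.length)) := by
        match h : k - w.length with
        | 0 => simp [cnt_nil]
        | (j+1) => simp [cnt, List.count_cons]
      omega

lemma block_blockish {w : List Bool} (h : IsDyck w) :
    Blockish ((true :: w) ++ [false]) := by
  refine ⟨by simp, (block_isDyck h).1, fun k hk hk' => ?_⟩
  match k with
  | (k+1) =>
    simp only [List.cons_append, List.length_cons, List.length_append,
      List.length_nil] at hk'
    have hkw : k ≤ w.length := by omega
    rw [List.cons_append, List.take_succ_cons]
    have he : (w ++ [false]).take k = w.take k := List.take_append_of_le_length hkw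
    have : cnt (true :: (w ++ [false]).take k) = 1 + cnt (w.take k) := by
      rw [he]; simp [cnt, List.count_cons]; ring
    rw [this]
    have := h.2 k
    omega

lemma counts_eq_iff (w : List Bool) : (w.count true = w.count false) ↔ cnt w = 0 := by
  simp [cnt]; omega

lemma dyckDim_eq_countP (w : List Bool) :
    dyckDim w = (List.range (w.length + 1)).countP
      (fun k => decide (0 < k) &&
        decide ((w.take k).count true = (w.take k).count false)) := by
  rw [dyckDim, List.countP_eq_length_filter]

lemma dyckDim_block_append {B rest : List Bool} (hB : Blockish B) :
    dyckDim (B ++ rest) = 1 + dyckDim rest := by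
  obtain ⟨hne, hbal, hstrict⟩ := hB
  have hb : 0 < B.length := List.length_pos_iff.2 hne
  rw [dyckDim_eq_countP, dyckDim_eq_countP]
  set p : ℕ → Bool := fun k => decide (0 < k) &&
    decide (((B ++ rest).take k).count true = ((B ++ rest).take k).count false) with hp
  set q : ℕ → Bool := fun k => decide (0 < k) &&
    decide ((rest.take k).count true = (rest.take k).count false) with hq
  have hlen : (B ++ rest).length + 1 = B.length + (rest.length + 1) := by
    simp [List.length_append]; omega
  rw [hlen, List.range_add, List.countP_append, List.countP_map]
  have h1 : (List.range B.length).countP p = 0 := by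
    rw [List.countP_eq_zero]
    intro k hk
    rw [List.mem_range] at hk
    rcases Nat.eq_zero_or_pos k with rfl | hkpos
    · simp [hp]
    · have he : (B ++ rest).take k = B.take k := List.take_append_of_le_length (le_of_lt hk)
      have := hstrict k hkpos hk
      simp only [hp, he, Bool.and_eq_true, decide_eq_true_eq, counts_eq_iff]
      omega
  rw [h1]
  have hBc : B.count true = B.count false := (counts_eq_iff B).mpr hbal
  have h2 : ∀ j, (p ∘ (B.length + ·)) (j + 1) = q (j + 1) := by
    intro j
    have he : (B ++ rest).take (B.length + (j + 1)) = B ++ rest.take (j + 1) :=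
      List.take_length_add_append (j + 1)
    simp only [hp, hq, Function.comp_apply]
    rw [he]
    simp only [List.count_append]
    refine congrArg₂ (· && ·) ?_ ?_
    · exact decide_eq_decide.mpr (by omega)
    · exact decide_eq_decide.mpr (by omega)
  have hp0 : (p ∘ (B.length + ·)) 0 = true := by
    have he : (B ++ rest).take (B.length + 0) = B := by
      rw [Nat.add_zero]; exact List.take_left
    simp only [hp, Function.comp_apply]
    rw [he]
    simp only [Bool.and_eq_true, decide_eq_true_eq]
    exact ⟨by omega, hBc⟩
  have hq0 : q 0 = false := by simp [hq]
  have h3 : (List.range rest.length).countP ((p ∘ (B.length + ·)) ∘ Nat.succ)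
      = (List.range rest.length).countP (q ∘ Nat.succ) := by
    apply List.countP_congr
    intro j _
    have := h2 j
    simp only [Function.comp_apply] at this ⊢
    rw [show Nat.succ j = j + 1 from rfl, this]
  rw [List.range_succ_eq_map, List.countP_cons, List.countP_cons, List.countP_map,
    List.countP_map, hp0, hq0, h3]
  simp
  omega

lemma dyckDim_nil : dyckDim [] = 0 := by simp [dyckDim]

lemma dyckDim_flatten {L : List (List Bool)} (h : ∀ w ∈ L, Blockish w) :
    dyckDim L.flatten = L.length := by
  induction L with
  | nil => simpa using dyckDim_nil
  | cons a t ih =>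
    rw [List.flatten_cons, dyckDim_block_append (h a (by simp)),
      ih (fun w hw => h w (by simp [hw])), List.length_cons]
    omega

lemma gamma_isDyck : ∀ n, IsDyck (gamma n) := by
  intro n
  induction n using Nat.strong_induction_on with
  | _ n ih =>
    match n with
    | 0 => rw [gamma]; exact isDyck_nil
    | 1 =>
      rw [gamma]
      refine ⟨by simp [cnt], fun k => ?_⟩
      match k with
      | 0 => simp [cnt]
      | 1 => simp [cnt]
      | (k+2) => simp [cnt, List.take_cons]
    | (m+2) =>
      rw [gamma]
      apply isDyck_flatten
      intro w hw
      simp only [List.mem_map, List.mem_range] at hw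
      obtain ⟨i, _, rfl⟩ := hw
      exact block_isDyck (ih _ (Nat.factorization_lt _ (by omega)))

/-- For every `n > 1`, the dimensionality of `γ n` equals `m`, where the
`m`-th prime (1-indexed; i.e. `Nat.nth Nat.Prime (m-1)`) is the greatest prime factor
of `n`.  Here `m = Nat.count Nat.Prime (gpf n) + 1` with
`gpf n = n.factorization.support.sup id`. -/
theorem dim_gamma (n : ℕ) (hn : 2 ≤ n) :
    dyckDim (gamma n) = Nat.count Nat.Prime (n.factorization.support.sup id) + 1 := by
  obtain ⟨m, rfl⟩ : ∃ m, n = m + 2 := ⟨n - 2, by omega⟩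
  rw [gamma]
  rw [dyckDim_flatten]
  · simp
  · intro w hw
    simp only [List.mem_map, List.mem_range] at hw
    obtain ⟨i, _, rfl⟩ := hw
    exact block_blockish (gamma_isDyck _)
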